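/- arXiv:1606.08657 — 3 statements merged into one kernel-verified Lean document; each statement's English description precedes it below -/
import Mathlib

section
/- Every relation with the crossover property is an alignment defined by a partition: if N₁ and N₂ are disjoint finite sets with N = N₁ ∪ N₂, and A ⊆ N₁ × N₂ has the crossover property, then there exists a set of colors C and a function λ : N → C such that A = {(n,m) ∈ N₁ × N₂ | λ(n) = λ(m)}. -/
/-- Every relation between two disjoint finite node sets having the crossover
property is the alignment defined by some partition (coloring). -/
theorem crossover_is_align_of_partition {V : Type} (N₁ N₂ : Set V)
    (hfin₁ : N₁.Finite) (hfin₂ : N₂.Finite) (hdisj : Disjoint N₁ N₂)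
    (A : Set (V × V)) (hsub : A ⊆ {p | p.1 ∈ N₁ ∧ p.2 ∈ N₂})
    (hcross : ∀ n n' m m', (n, m) ∈ A → (n, m') ∈ A → (n', m) ∈ A →
      (n', m') ∈ A) :
    ∃ (C : Type) (lam : V → C),
      A = {p | p.1 ∈ N₁ ∧ p.2 ∈ N₂ ∧ lam p.1 = lam p.2} := by
  classical
  refine ⟨Set V ⊕ V, fun v =>
    if _ : (∃ m, (v, m) ∈ A) then Sum.inl {m | (v, m) ∈ A}
    else if _ : (∃ n0, (n0, v) ∈ A) then
      Sum.inl {m' | ∃ n0, (n0, v) ∈ A ∧ (n0, m') ∈ A}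
    else Sum.inr v, ?_⟩
  ext ⟨n, m⟩
  simp only [Set.mem_setOf_eq]
  constructor
  · intro hA
    obtain ⟨hn1, hm2⟩ := hsub hA
    refine ⟨hn1, hm2, ?_⟩
    have hn : ∃ m', (n, m') ∈ A := ⟨m, hA⟩
    have hmnot : ¬ ∃ m', (m, m') ∈ A := by
      rintro ⟨m', h⟩
      exact hdisj.le_bot ⟨(hsub h).1, hm2⟩
    have hm : ∃ n0, (n0, m) ∈ A := ⟨n, hA⟩
    rw [dif_pos hn, dif_neg hmnot, dif_pos hm]
    congr 1
    ext m'
    simp only [Set.mem_setOf_eq]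
    constructor
    · intro h; exact ⟨n, hA, h⟩
    · rintro ⟨n0, h1, h2⟩; exact hcross n0 n m m' h1 h2 hA
  · rintro ⟨hn1, hm2, heq⟩
    have hne : n ≠ m := by
      rintro rfl; exact hdisj.le_bot ⟨hn1, hm2⟩
    by_cases hn : ∃ m', (n, m') ∈ A
    · have hmnot : ¬ ∃ m', (m, m') ∈ A := by
        rintro ⟨m', h⟩
        exact hdisj.le_bot ⟨(hsub h).1, hm2⟩
      rw [dif_pos hn, dif_neg hmnot] at heq
      by_cases hm : ∃ n0, (n0, m) ∈ A
      · rw [dif_pos hm] at heq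
        have := Sum.inl.inj heq
        have hmem : m ∈ {m' | ∃ n0, (n0, m) ∈ A ∧ (n0, m') ∈ A} := by
          obtain ⟨n0, h⟩ := hm
          exact ⟨n0, h, h⟩
        rw [← this] at hmem
        exact hmem
      · rw [dif_neg hm] at heq
        exact absurd heq (by simp)
    · have hnnot : ¬ ∃ n0, (n0, n) ∈ A := by
        rintro ⟨n0, h⟩
        exact hdisj.le_bot ⟨hn1, (hsub h).2⟩
      rw [dif_neg hn, dif_neg hnnot] at heq
      by_cases hm : ∃ m', (m, m') ∈ A
      · rw [dif_pos hm] at heq; exact absurd heq (by simp)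
      · by_cases hm2' : ∃ n0, (n0, m) ∈ A
        · rw [dif_neg hm, dif_pos hm2'] at heq; exact absurd heq (by simp)
        · rw [dif_neg hm, dif_neg hm2'] at heq
          exact absurd (Sum.inr.inj heq) hne
end

section
/- Bisimulation partition refinement captures maximal bisimulation: for a finite triple graph G = (N, E, ℓ), the intersection ⋂_k R_k of the bisimulation partition refinement sequence equals the maximal bisimulation on G, i.e., the union of all bisimulations on G. -/
/-- The outbound neighborhood of a node `n` in a triple graph with edge set `E`:
the pairs `(p, o)` such that `(n, p, o)` is an edge. -/
def outNbr {V : Type*} (E : Set (V × V × V)) (n : V) : Set (V × V) :=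
  {po | (n, po.1, po.2) ∈ E}

/-- `R` is a simulation on the triple graph with edges `E` and labeling `ℓ`. -/
def IsSimulation {V I : Type*} (E : Set (V × V × V)) (ℓ : V → I)
    (R : Set (V × V)) : Prop :=
  ∀ n m, (n, m) ∈ R → ℓ n = ℓ m ∧
    ∀ p o, (p, o) ∈ outNbr E n →
      ∃ p' o', (p', o') ∈ outNbr E m ∧ (p, p') ∈ R ∧ (o, o') ∈ R

/-- `R` is a bisimulation if both `R` and its inverse are simulations. -/
def IsBisimulation {V I : Type*} (E : Set (V × V × V)) (ℓ : V → I)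
    (R : Set (V × V)) : Prop :=
  IsSimulation E ℓ R ∧ IsSimulation E ℓ {x | (x.2, x.1) ∈ R}

/-- The bisimulation partition refinement sequence: `seqR E ℓ 0` relates nodes
with equal labels, and `seqR E ℓ (k+1)` keeps a pair related by `seqR E ℓ k`
whose outbound neighborhoods match up to `seqR E ℓ k` in both directions. -/
def seqR {V I : Type*} (E : Set (V × V × V)) (ℓ : V → I) :
    ℕ → V → V → Prop
  | 0, n, m => ℓ n = ℓ m
  | k + 1, n, m => seqR E ℓ k n m ∧
      (∀ p o, (p, o) ∈ outNbr E n → ∃ p' o', (p', o') ∈ outNbr E m ∧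
        seqR E ℓ k p p' ∧ seqR E ℓ k o o') ∧
      (∀ p' o', (p', o') ∈ outNbr E m → ∃ p o, (p, o) ∈ outNbr E n ∧
        seqR E ℓ k p p' ∧ seqR E ℓ k o o')

lemma pigeon {α : Type*} [Finite α] (P : ℕ → α → Prop)
    (anti : ∀ k c, P (k + 1) c → P k c) (h : ∀ k, ∃ c, P k c) :
    ∃ c, ∀ k, P k c := by
  have mono : ∀ c k j, k ≤ j → P j c → P k c := by
    intro c k j hkj hj
    induction j with
    | zero => exact Nat.le_zero.mp hkj ▸ hj
    | succ j ih =>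
      rcases Nat.lt_or_ge k (j + 1) with hl | hg
      · exact ih (by omega) (anti _ _ hj)
      · have hk : k = j + 1 := by omega
        exact hk ▸ hj
  choose f hf using h
  obtain ⟨c, hc⟩ := Finite.exists_infinite_fiber f
  refine ⟨c, fun k => ?_⟩
  have hinf : (f ⁻¹' {c}).Infinite := by
    rw [Set.infinite_coe_iff] at hc; exact hc
  obtain ⟨j, hj, hkj⟩ := hinf.exists_gt k
  have : f j = c := hj
  exact mono c k j (le_of_lt hkj) (this ▸ hf j)

lemma seqR_base {V I : Type*} (E : Set (V × V × V)) (ℓ : V → I)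
    {k n m} (h : seqR E ℓ k n m) : ℓ n = ℓ m := by
  induction k with
  | zero => exact h
  | succ k ih => exact ih h.1

/-- Bisimulation partition refinement captures maximal bisimulation: the
intersection of all stages of the refinement sequence equals the union of all
bisimulations. -/
theorem seqR_iInter_eq_maximal_bisimulation {V I : Type*} [Fintype V]
    (E : Set (V × V × V)) (ℓ : V → I) :
    {p : V × V | ∀ k, seqR E ℓ k p.1 p.2} = ⋃₀ {R | IsBisimulation E ℓ R} := by
  ext ⟨n, m⟩
  simp only [Set.mem_setOf_eq, Set.mem_sUnion]
  constructor
  · intro h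
    refine ⟨{p : V × V | ∀ k, seqR E ℓ k p.1 p.2}, ?_, h⟩
    constructor
    · intro a b hab
      refine ⟨seqR_base E ℓ (hab 0), ?_⟩
      intro p o hpo
      have hex : ∀ k, ∃ c : V × V, c ∈ outNbr E b ∧ seqR E ℓ k p c.1 ∧ seqR E ℓ k o c.2 := by
        intro k
        obtain ⟨p', o', h1, h2, h3⟩ := (hab (k + 1)).2.1 p o hpo
        exact ⟨(p', o'), h1, h2, h3⟩
      obtain ⟨c, hc⟩ := pigeon _ (fun k c hc => ⟨hc.1, (hc.2.1).1, (hc.2.2).1⟩) hex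
      exact ⟨c.1, c.2, (hc 0).1, fun k => (hc k).2.1, fun k => (hc k).2.2⟩
    · intro a b hab
      simp only [Set.mem_setOf_eq] at hab
      refine ⟨(seqR_base E ℓ (hab 0)).symm, ?_⟩
      intro p o hpo
      have hex : ∀ k, ∃ c : V × V, c ∈ outNbr E b ∧ seqR E ℓ k c.1 p ∧ seqR E ℓ k c.2 o := by
        intro k
        obtain ⟨p', o', h1, h2, h3⟩ := (hab (k + 1)).2.2 p o hpo
        exact ⟨(p', o'), h1, h2, h3⟩
      obtain ⟨c, hc⟩ := pigeon _ (fun k c hc => ⟨hc.1, (hc.2.1).1, (hc.2.2).1⟩) hex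
      exact ⟨c.1, c.2, (hc 0).1, fun k => (hc k).2.1, fun k => (hc k).2.2⟩
  · rintro ⟨R, hR, hnm⟩ k
    induction k generalizing n m with
    | zero => exact (hR.1 n m hnm).1
    | succ k ih =>
      refine ⟨ih _ _ hnm, ?_, ?_⟩
      · intro p o hpo
        obtain ⟨p', o', h1, h2, h3⟩ := (hR.1 n m hnm).2 p o hpo
        exact ⟨p', o', h1, ih _ _ h2, ih _ _ h3⟩
      · intro p' o' hpo
        obtain ⟨p, o, h1, h2, h3⟩ := (hR.2 m n hnm).2 p' o' hpo
        exact ⟨p, o, h1, ih _ _ h2, ih _ _ h3⟩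
end

section
/- Prefix filtering for the overlap measure is sound: let X and Y be finite sets with X nonempty, let θ ∈ [0,1], let k = |X|, and suppose |X ∩ Y| ≥ θ · |X ∪ Y|. Then every subset S ⊆ X with |S| > k·(1 − θ) satisfies S ∩ Y ≠ ∅. -/
/-- Prefix filtering for the overlap measure is sound: if `overlap(X, Y) ≥ θ`,
then every subset of `X` of size greater than `|X| * (1 - θ)` intersects `Y`. -/
theorem overlap_prefix_filtering {α : Type*} [DecidableEq α]
    (X Y : Finset α) (hX : X.Nonempty)
    (θ : ℝ) (hθ0 : 0 ≤ θ) (hθ1 : θ ≤ 1)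
    (hover : θ * ((X ∪ Y).card : ℝ) ≤ ((X ∩ Y).card : ℝ)) :
    ∀ S ⊆ X, (X.card : ℝ) * (1 - θ) < (S.card : ℝ) → (S ∩ Y).Nonempty := by
  intro S hSX hcard
  rw [Finset.nonempty_iff_ne_empty]
  intro hempty
  have hSdiff : S ⊆ X \ Y := by
    intro a ha
    refine Finset.mem_sdiff.mpr ⟨hSX ha, fun haY => ?_⟩
    have : a ∈ S ∩ Y := Finset.mem_inter.mpr ⟨ha, haY⟩
    simp [hempty] at this
  have h1 : (S.card : ℝ) ≤ ((X \ Y).card : ℝ) := by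
    exact_mod_cast Finset.card_le_card hSdiff
  have h2 : ((X \ Y).card : ℝ) + ((X ∩ Y).card : ℝ) = (X.card : ℝ) := by
    exact_mod_cast Finset.card_sdiff_add_card_inter X Y
  have h3 : θ * (X.card : ℝ) ≤ ((X ∩ Y).card : ℝ) := by
    refine le_trans ?_ hover
    have : (X.card : ℝ) ≤ ((X ∪ Y).card : ℝ) := by
      exact_mod_cast Finset.card_le_card (Finset.subset_union_left)
    nlinarith
  nlinarith
end
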